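/- arXiv:2306.03394 — 2 statements merged into one kernel-verified Lean document; each statement's English description precedes it below -/
import Mathlib

section
/- Lemma (the first exit time is finite and the first exit map exists everywhere). Let A, B, C be the observer canonical realization with A Hurwitz and with positive DC gain (−C A⁻¹ B > 0). Then for every ξ ∈ ℝⁿ the set {t > 0 : C x₊(t;ξ) < 0} is nonempty, so the first exit time τ₊(ξ) is finite. Moreover, if C ξ ≥ 0 then C x₊(τ₊(ξ);ξ) = 0, i.e. the first exit map ψ₊(ξ;1) exists and lies on the switching hyperplane {x : Cx = 0}. -/
noncomputable section
open scoped Matrix ENNReal NNReal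
open Filter

/-- The observer canonical realization matrix `A` in dimension `n + 2`
(so the dimension is an arbitrary integer `≥ 2`): subdiagonal ones, last column `-a`. -/
def obsA (n : ℕ) (a : Fin (n + 2) → ℝ) : Matrix (Fin (n + 2)) (Fin (n + 2)) ℝ :=
  Matrix.of fun i j =>
    if (j : ℕ) = n + 1 then -a i else if (i : ℕ) = (j : ℕ) + 1 then 1 else 0

/-- A real square matrix is Hurwitz if all its complex eigenvalues have negative real part. -/
def IsHurwitz {m : ℕ} (A : Matrix (Fin m) (Fin m) ℝ) : Prop :=
  ∀ μ ∈ spectrum ℂ (A.map Complex.ofReal), μ.re < 0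

/-- Matrix exponential. -/
noncomputable def mexp {m : ℕ} (A : Matrix (Fin m) (Fin m) ℝ) : Matrix (Fin m) (Fin m) ℝ :=
  NormedSpace.exp A

/-- The solution `x₊(t;ξ) = e^{At}(ξ − A⁻¹B) + A⁻¹B` of `ẋ = Ax − B`, `x(0) = ξ`. -/
noncomputable def sol {m : ℕ} (A : Matrix (Fin m) (Fin m) ℝ) (B : Fin m → ℝ)
    (ξ : Fin m → ℝ) (t : ℝ) : Fin m → ℝ :=
  mexp (t • A) *ᵥ (ξ - A⁻¹ *ᵥ B) + A⁻¹ *ᵥ B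

/-- The first exit time from positive sign: `τ₊(ξ) = inf{t > 0 : C x₊(t;ξ) < 0}`,
where `C x = xₙ` is the last coordinate. -/
noncomputable def tauPlus (n : ℕ) (A : Matrix (Fin (n + 2)) (Fin (n + 2)) ℝ)
    (B ξ : Fin (n + 2) → ℝ) : ℝ :=
  sInf {t : ℝ | 0 < t ∧ sol A B ξ t (Fin.last (n + 1)) < 0}

/-- The first exit map `ψ₊(ξ;1) = x₊(τ₊(ξ);ξ)`. -/
noncomputable def psi1 (n : ℕ) (A : Matrix (Fin (n + 2)) (Fin (n + 2)) ℝ)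
    (B ξ : Fin (n + 2) → ℝ) : Fin (n + 2) → ℝ :=
  sol A B ξ (tauPlus n A B ξ)

/-- The iterated exit maps: `psiN n A B k ξ = ψ₊(ξ;k)` for `k ≥ 1`
(with the convention `psiN n A B 0 ξ = -ξ`, consistent with the
recursion `ψ₊(ξ;k) = ψ₊(−ψ₊(ξ;k−1);1)`). -/
noncomputable def psiN (n : ℕ) (A : Matrix (Fin (n + 2)) (Fin (n + 2)) ℝ)
    (B : Fin (n + 2) → ℝ) : ℕ → (Fin (n + 2) → ℝ) → (Fin (n + 2) → ℝ)
  | 0, ξ => -ξ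
  | k + 1, ξ => psi1 n A B (-(psiN n A B k ξ))

/-- View a vector of `ℝⁿ` as an element of Euclidean space (so that `‖euc v‖` is the
Euclidean 2-norm). -/
noncomputable def euc {m : ℕ} (v : Fin m → ℝ) : EuclideanSpace ℝ (Fin m) := WithLp.toLp 2 v

/-- The operator 2-norm of a matrix: the operator norm of the induced map on Euclidean space. -/
noncomputable def opn {m : ℕ} (A : Matrix (Fin m) (Fin m) ℝ) : ℝ :=
  ‖LinearMap.toContinuousLinearMap (Matrix.toEuclideanLin A)‖

/-- The set `𝒟 = {x : ‖x‖₂ ≤ R, xₙ = 0, x_{n−1} ≥ |b_{n−1}|}` on the switching hyperplane. -/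
noncomputable def ultSet (n : ℕ) (b : Fin (n + 2) → ℝ) (R : ℝ) : Set (Fin (n + 2) → ℝ) :=
  {x | ‖euc x‖ ≤ R ∧ x (Fin.last (n + 1)) = 0 ∧
    |b (Fin.last (n + 1))| ≤ x (⟨n, by omega⟩ : Fin (n + 2))}

/-- A real square matrix is Schur stable if all its complex eigenvalues have modulus `< 1`. -/
def IsSchur {m : ℕ} (P : Matrix (Fin m) (Fin m) ℝ) : Prop :=
  ∀ μ ∈ spectrum ℂ (P.map Complex.ofReal), ‖μ‖ < 1


section AuxProof

open NormedSpace
open scoped Nat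

variable {m : ℕ}

lemma aux_pow_mul_exp_tendsto (j : ℕ) {r : ℝ} (hr : r < 0) :
    Tendsto (fun t : ℝ => t ^ j * Real.exp (r * t)) atTop (nhds 0) := by
  have hc : (0:ℝ) < -r := by linarith
  have h1 : Tendsto (fun t : ℝ => (-r) * t) atTop atTop :=
    Tendsto.const_mul_atTop hc tendsto_id
  have h2 := (Real.tendsto_pow_mul_exp_neg_atTop_nhds_zero j).comp h1
  have h3 := h2.const_mul (((-r)⁻¹) ^ j)
  rw [mul_zero] at h3
  refine h3.congr fun t => ?_
  simp only [Function.comp]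
  rw [mul_pow]
  have : -(-r * t) = r * t := by ring
  rw [this]
  have hr0 : r ≠ 0 := hr.ne
  field_simp
  rw [← mul_pow, show -(1 / r) * -r = 1 by field_simp, one_pow, one_mul]

/-- complex scalar limit -/
lemma aux_scalar_tendsto (j : ℕ) {μ : ℂ} (hμ : μ.re < 0) :
    Tendsto (fun t : ℝ => Complex.exp ((t : ℂ) * μ) * (((j ! : ℝ)⁻¹ * t ^ j : ℝ) : ℂ))
      atTop (nhds 0) := by
  rw [tendsto_zero_iff_norm_tendsto_zero]
  have hbase := (aux_pow_mul_exp_tendsto j hμ).const_mul (j ! : ℝ)⁻¹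
  rw [mul_zero] at hbase
  refine Tendsto.congr' ?_ hbase
  filter_upwards [eventually_ge_atTop (0:ℝ)] with t ht
  rw [norm_mul, Complex.norm_exp]
  have hre : ((t : ℂ) * μ).re = μ.re * t := by
    simp [Complex.mul_re]; ring
  rw [hre]
  rw [Complex.norm_real, Real.norm_eq_abs, abs_mul, abs_of_nonneg (by positivity : (0:ℝ) ≤ (j ! : ℝ)⁻¹), abs_of_nonneg (by positivity : (0:ℝ) ≤ t ^ j)]
  ring

/-- Key lemma: decay of `exp (t • M) *ᵥ w` for Hurwitz complex matrices. -/
lemma aux_tendsto_exp_mulVec_zero (M : Matrix (Fin m) (Fin m) ℂ)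
    (hM : ∀ μ ∈ spectrum ℂ M, μ.re < 0) (w : Fin m → ℂ) :
    Tendsto (fun t : ℝ => exp (t • M) *ᵥ w) atTop (nhds 0) := by
  letI : SeminormedRing (Matrix (Fin m) (Fin m) ℂ) := Matrix.linftyOpSemiNormedRing
  letI : NormedRing (Matrix (Fin m) (Fin m) ℂ) := Matrix.linftyOpNormedRing
  letI : NormedAlgebra ℝ (Matrix (Fin m) (Fin m) ℂ) := Matrix.linftyOpNormedAlgebra
  letI : NormedAlgebra ℚ (Matrix (Fin m) (Fin m) ℂ) := Matrix.linftyOpNormedAlgebra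
  letI : NormedAlgebra ℂ (Matrix (Fin m) (Fin m) ℂ) := Matrix.linftyOpNormedAlgebra
  set f : Module.End ℂ (Fin m → ℂ) := Matrix.toLinAlgEquiv' M with hf
  let S : Submodule ℂ (Fin m → ℂ) :=
  { carrier := {w | Tendsto (fun t : ℝ => exp (t • M) *ᵥ w) atTop (nhds 0)}
    add_mem' := fun hx hy => by
      simpa [Matrix.mulVec_add] using hx.add hy
    zero_mem' := by
      simpa [Matrix.mulVec_zero] using (tendsto_const_nhds :
        Tendsto (fun _ : ℝ => (0 : Fin m → ℂ)) atTop _)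
    smul_mem' := fun c x hx => by
      simpa [Matrix.mulVec_smul] using hx.const_smul c }
  have hS : ∀ μ, f.maxGenEigenspace μ ≤ S := by
    intro μ
    rcases eq_or_ne (f.maxGenEigenspace μ) ⊥ with hbot | hne
    · rw [hbot]; exact bot_le
    · have hμspec : μ ∈ spectrum ℂ M := by
        rw [← AlgEquiv.spectrum_eq (Matrix.toLinAlgEquiv' (n := Fin m) (R := ℂ)) M]
        exact (Module.End.HasUnifEigenvalue.lt (k := (⊤ : ℕ∞)) zero_lt_one hne).mem_spectrum
      have hre : μ.re < 0 := hM μ hμspec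
      intro w hw
      obtain ⟨k, hk⟩ := (Module.End.mem_maxGenEigenspace f μ w).mp hw
      set N : Matrix (Fin m) (Fin m) ℂ := M - μ • 1 with hN
      have hfN : f - μ • 1 = Matrix.toLinAlgEquiv' N := by
        rw [hN, map_sub, hf]
        congr 1
        rw [map_smul, map_one]
      have hkN : N ^ k *ᵥ w = 0 := by
        have : (f - μ • 1) ^ k = Matrix.toLinAlgEquiv' (N ^ k) := by
          rw [hfN, map_pow]
        rw [this, Matrix.toLinAlgEquiv'_apply] at hk
        exact hk
      show Tendsto (fun t : ℝ => exp (t • M) *ᵥ w) atTop (nhds 0)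
      have hdecomp : ∀ t : ℝ, exp (t • M) *ᵥ w
          = ∑ j ∈ Finset.range k,
              (Complex.exp ((t:ℂ) * μ) * (((j ! : ℝ)⁻¹ * t ^ j : ℝ) : ℂ)) • (N ^ j *ᵥ w) := by
        intro t
        have hsplit : t • M = ((t : ℂ) * μ) • (1 : Matrix (Fin m) (Fin m) ℂ) + t • N := by
          rw [hN, smul_sub]
          have h1 : t • (μ • (1 : Matrix (Fin m) (Fin m) ℂ)) = ((t:ℂ) * μ) • 1 := by
            rw [← smul_assoc]; congr 1
          rw [← h1]
          abel
        have hcomm : Commute (((t : ℂ) * μ) • (1 : Matrix (Fin m) (Fin m) ℂ)) (t • N) :=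
          (Commute.one_left (t • N)).smul_left _
        rw [hsplit, Matrix.exp_add_of_commute _ _ hcomm]
        have hsc : exp (((t:ℂ) * μ) • (1 : Matrix (Fin m) (Fin m) ℂ))
            = Complex.exp ((t:ℂ) * μ) • (1 : Matrix (Fin m) (Fin m) ℂ) := by
          have h2 := map_exp (algebraMap ℂ (Matrix (Fin m) (Fin m) ℂ))
            (continuous_algebraMap _ _) ((t:ℂ) * μ)
          rw [Algebra.algebraMap_eq_smul_one, Algebra.algebraMap_eq_smul_one] at h2
          refine h2.symm.trans ?_
          congr 1
          rw [Complex.exp_eq_exp_ℂ]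
        rw [hsc, smul_mul_assoc, one_mul, Matrix.smul_mulVec]
        have hfin : exp (t • N) *ᵥ w
            = ∑ j ∈ Finset.range k, (((j ! : ℝ)⁻¹ * t ^ j : ℝ)) • (N ^ j *ᵥ w) := by
          have hs := exp_series_hasSum_exp' (𝕂 := ℝ) (t • N)
          let L : Matrix (Fin m) (Fin m) ℂ →ₗ[ℝ] (Fin m → ℂ) :=
            { toFun := fun P => P *ᵥ w
              map_add' := fun P Q => Matrix.add_mulVec P Q w
              map_smul' := fun r P => Matrix.smul_mulVec r P w }
          have hLcont : Continuous L := by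
            exact Continuous.matrix_mulVec continuous_id continuous_const
          have hs2 := hs.mapL (⟨L, hLcont⟩ : Matrix (Fin m) (Fin m) ℂ →L[ℝ] (Fin m → ℂ))
          have hterm : ∀ j : ℕ,
              (⟨L, hLcont⟩ : Matrix (Fin m) (Fin m) ℂ →L[ℝ] (Fin m → ℂ)) ((j ! : ℝ)⁻¹ • (t • N) ^ j)
              = (((j ! : ℝ)⁻¹ * t ^ j : ℝ)) • (N ^ j *ᵥ w) := by
            intro j
            show ((j ! : ℝ)⁻¹ • (t • N) ^ j) *ᵥ w = _
            rw [smul_pow, Matrix.smul_mulVec, Matrix.smul_mulVec, smul_smul]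
          rw [show exp (t • N) *ᵥ w
              = (⟨L, hLcont⟩ : Matrix (Fin m) (Fin m) ℂ →L[ℝ] (Fin m → ℂ)) (exp (t • N)) from rfl]
          refine HasSum.unique (by simp only [hterm] at hs2; exact hs2) ?_
          refine hasSum_sum_of_ne_finset_zero ?_
          intro j hj
          rw [Finset.mem_range, not_lt] at hj
          have hNj : N ^ j = N ^ (j - k) * N ^ k := by
            rw [← pow_add]; congr 1; omega
          rw [hNj, ← Matrix.mulVec_mulVec, hkN, Matrix.mulVec_zero, smul_zero]
        rw [hfin, Finset.smul_sum]
        refine Finset.sum_congr rfl fun j _ => ?_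
        rw [← algebraMap_smul ℂ (((j ! : ℝ)⁻¹ * t ^ j : ℝ)) (N ^ j *ᵥ w), smul_smul]
        rfl
      have hlim : Tendsto (fun t : ℝ => ∑ j ∈ Finset.range k,
          (Complex.exp ((t:ℂ) * μ) * (((j ! : ℝ)⁻¹ * t ^ j : ℝ) : ℂ)) • (N ^ j *ᵥ w))
          atTop (nhds 0) := by
        have h0 : (0 : Fin m → ℂ) = ∑ j ∈ Finset.range k, (0 : Fin m → ℂ) := by simp
        rw [h0]
        refine tendsto_finset_sum _ fun j _ => ?_
        have := (aux_scalar_tendsto j hre).smul_const (N ^ j *ᵥ w)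
        simpa using this
      exact hlim.congr fun t => (hdecomp t).symm
  have htop := Module.End.iSup_maxGenEigenspace_eq_top f
  have : (⊤ : Submodule ℂ (Fin m → ℂ)) ≤ S := htop ▸ iSup_le hS
  exact this (Submodule.mem_top)


lemma aux_exp_map (A : Matrix (Fin m) (Fin m) ℝ) (t : ℝ) :
    (exp (t • A)).map Complex.ofReal = exp (t • A.map Complex.ofReal) := by
  letI : SeminormedRing (Matrix (Fin m) (Fin m) ℝ) := Matrix.linftyOpSemiNormedRing
  letI : NormedRing (Matrix (Fin m) (Fin m) ℝ) := Matrix.linftyOpNormedRing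
  letI : NormedAlgebra ℝ (Matrix (Fin m) (Fin m) ℝ) := Matrix.linftyOpNormedAlgebra
  letI : NormedAlgebra ℚ (Matrix (Fin m) (Fin m) ℝ) := Matrix.linftyOpNormedAlgebra
  letI : SeminormedRing (Matrix (Fin m) (Fin m) ℂ) := Matrix.linftyOpSemiNormedRing
  letI : NormedRing (Matrix (Fin m) (Fin m) ℂ) := Matrix.linftyOpNormedRing
  letI : NormedAlgebra ℝ (Matrix (Fin m) (Fin m) ℂ) := Matrix.linftyOpNormedAlgebra
  letI : NormedAlgebra ℚ (Matrix (Fin m) (Fin m) ℂ) := Matrix.linftyOpNormedAlgebra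
  have hcont : Continuous (fun P : Matrix (Fin m) (Fin m) ℝ => P.map Complex.ofReal) :=
    Continuous.matrix_map continuous_id Complex.continuous_ofReal
  have h := map_exp (Complex.ofRealHom.mapMatrix
      (m := Fin m) : Matrix (Fin m) (Fin m) ℝ →+* Matrix (Fin m) (Fin m) ℂ) hcont (t • A)
  have hmap : (Complex.ofRealHom.mapMatrix (t • A) : Matrix (Fin m) (Fin m) ℂ)
      = t • A.map Complex.ofReal := by
    ext i j
    simp [RingHom.mapMatrix_apply, Matrix.map_apply]
  rw [hmap] at h
  exact h

lemma aux_mulVec_map (M : Matrix (Fin m) (Fin m) ℝ) (v : Fin m → ℝ) (i : Fin m) :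
    ((M.map Complex.ofReal) *ᵥ (fun j => (v j : ℂ))) i = ((M *ᵥ v) i : ℂ) := by
  simp only [Matrix.mulVec, dotProduct, Matrix.map_apply]
  push_cast
  rfl

lemma aux_tendsto_real (A : Matrix (Fin m) (Fin m) ℝ)
    (hA : ∀ μ ∈ spectrum ℂ (A.map Complex.ofReal), μ.re < 0)
    (v : Fin m → ℝ) (i : Fin m) :
    Tendsto (fun t : ℝ => (exp (t • A) *ᵥ v) i) atTop (nhds 0) := by
  have hmain : Tendsto (fun t : ℝ => exp (t • A.map Complex.ofReal) *ᵥ (fun j => (v j : ℂ)))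
      atTop (nhds 0) := aux_tendsto_exp_mulVec_zero _ hA _
  have h2 : Tendsto (fun t : ℝ =>
      ((exp (t • A.map Complex.ofReal) *ᵥ (fun j => (v j : ℂ))) i).re) atTop (nhds 0) := by
    have hc : Continuous fun x : Fin m → ℂ => (x i).re :=
      Complex.continuous_re.comp (continuous_apply i)
    exact (hc.tendsto 0).comp hmain
  refine h2.congr fun t => ?_
  rw [← aux_exp_map, aux_mulVec_map]
  simp

lemma aux_cont (A : Matrix (Fin m) (Fin m) ℝ) (v w : Fin m → ℝ) (i : Fin m) :
    Continuous (fun t : ℝ => (exp (t • A) *ᵥ v) i + w i) := by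
  letI : SeminormedRing (Matrix (Fin m) (Fin m) ℝ) := Matrix.linftyOpSemiNormedRing
  letI : NormedRing (Matrix (Fin m) (Fin m) ℝ) := Matrix.linftyOpNormedRing
  letI : NormedAlgebra ℝ (Matrix (Fin m) (Fin m) ℝ) := Matrix.linftyOpNormedAlgebra
  letI : NormedAlgebra ℚ (Matrix (Fin m) (Fin m) ℝ) := Matrix.linftyOpNormedAlgebra
  have h1 : Continuous fun t : ℝ => exp (t • A) :=
    exp_continuous.comp (continuous_id.smul continuous_const)
  exact ((continuous_apply i).comp (h1.matrix_mulVec continuous_const)).add continuous_const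

end AuxProof

/-- the first exit time is finite and the first exit map exists
everywhere. If `A` is Hurwitz and the DC gain `−C A⁻¹ B` is positive, then for every
`ξ` the set `{t > 0 : C x₊(t;ξ) < 0}` is nonempty (so `τ₊(ξ)` is finite); moreover if
`Cξ ≥ 0` then `C x₊(τ₊(ξ);ξ) = 0`, i.e. `ψ₊(ξ;1)` lies on the switching hyperplane. -/
theorem first_exit_time_finite_and_exit_map_exists
    (n : ℕ) (a b : Fin (n + 2) → ℝ)
    (hA : IsHurwitz (obsA n a))
    (hdc : 0 < -(((obsA n a)⁻¹ *ᵥ b) (Fin.last (n + 1))))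
    (ξ : Fin (n + 2) → ℝ) :
    {t : ℝ | 0 < t ∧ sol (obsA n a) b ξ t (Fin.last (n + 1)) < 0}.Nonempty ∧
    (0 ≤ ξ (Fin.last (n + 1)) →
      sol (obsA n a) b ξ (tauPlus n (obsA n a) b ξ) (Fin.last (n + 1)) = 0) := by
  classical
  set A := obsA n a with hAdef
  set w : Fin (n+2) → ℝ := A⁻¹ *ᵥ b with hwdef
  have hFeq : ∀ t : ℝ, sol A b ξ t (Fin.last (n+1))
      = (NormedSpace.exp (t • A) *ᵥ (ξ - w)) (Fin.last (n+1)) + w (Fin.last (n+1)) :=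
    fun t => rfl
  have hneg : w (Fin.last (n+1)) < 0 := by linarith [hdc]
  have hlim : Tendsto (fun t : ℝ => sol A b ξ t (Fin.last (n+1))) atTop
      (nhds (w (Fin.last (n+1)))) := by
    have h0 := aux_tendsto_real A hA (ξ - w) (Fin.last (n+1))
    have h1 := h0.add_const (w (Fin.last (n+1)))
    rw [zero_add] at h1
    exact h1.congr fun t => (hFeq t).symm
  have hev : ∀ᶠ t in atTop, sol A b ξ t (Fin.last (n+1)) < 0 :=
    hlim.eventually_lt_const hneg
  have hne : {t : ℝ | 0 < t ∧ sol A b ξ t (Fin.last (n+1)) < 0}.Nonempty := by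
    obtain ⟨t, ht1, ht2⟩ := ((eventually_gt_atTop (0:ℝ)).and hev).exists
    exact ⟨t, ht1, ht2⟩
  refine ⟨hne, ?_⟩
  intro hξ
  set F : ℝ → ℝ := fun t => sol A b ξ t (Fin.last (n+1)) with hFdef
  have hFcont : Continuous F := by
    have hc := aux_cont A (ξ - w) w (Fin.last (n+1))
    exact hc.congr fun t => (hFeq t).symm
  have hF0 : F 0 = ξ (Fin.last (n+1)) := by
    have h1 : F 0 = (NormedSpace.exp ((0:ℝ) • A) *ᵥ (ξ - w)) (Fin.last (n+1))
        + w (Fin.last (n+1)) := hFeq 0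
    rw [h1, zero_smul, NormedSpace.exp_zero, Matrix.one_mulVec]
    simp
  set S := {t : ℝ | 0 < t ∧ F t < 0} with hSdef
  have hSne : S.Nonempty := hne
  have hbdd : BddBelow S := ⟨0, fun t ht => ht.1.le⟩
  have hτS : tauPlus n A b ξ = sInf S := rfl
  set τ := tauPlus n A b ξ with hτ
  have hτ0 : 0 ≤ τ := by rw [hτS]; exact le_csInf hSne fun t ht => ht.1.le
  have hle : F τ ≤ 0 := by
    have hcl : τ ∈ closure S := by rw [hτS]; exact csInf_mem_closure hSne hbdd
    have hsub : closure S ⊆ {t | F t ≤ 0} :=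
      closure_minimal (fun t ht => ht.2.le) (isClosed_le hFcont continuous_const)
    exact hsub hcl
  have hge : 0 ≤ F τ := by
    rcases eq_or_lt_of_le hτ0 with h0 | hpos
    · rw [← h0, hF0]; exact hξ
    · have hIco : ∀ t ∈ Set.Ico (0:ℝ) τ, 0 ≤ F t := by
        intro t ht
        rcases eq_or_lt_of_le ht.1 with h0' | hpos'
        · rw [← h0', hF0]; exact hξ
        · by_contra hlt
          push_neg at hlt
          have hmem : t ∈ S := ⟨hpos', hlt⟩
          have hle' := csInf_le hbdd hmem
          rw [← hτS] at hle'
          exact absurd ht.2 (not_lt.mpr hle')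
      have hclosed : IsClosed {t : ℝ | 0 ≤ F t} := isClosed_le continuous_const hFcont
      have hsub : closure (Set.Ico (0:ℝ) τ) ⊆ {t | 0 ≤ F t} := closure_minimal hIco hclosed
      have hmem : τ ∈ closure (Set.Ico (0:ℝ) τ) := by
        rw [closure_Ico (ne_of_lt hpos)]
        exact Set.right_mem_Icc.mpr hτ0
      exact hsub hmem
  exact le_antisymm hle hge
end
end

section
/- Lemma (minimum inter-switch duration). Let A, B, C be the observer canonical realization with A Hurwitz, and assume b_{n−1} ≠ 0. Let M ≥ 1 and σ > 0 satisfy ‖e^{At}‖₂ ≤ M e^{−σt} for all t ≥ 0, and set M̂ = M(2M+1)‖B‖₂/σ. Let x(·) be a trajectory of the form x(t) = e^{At}x₀ + ∫₀ᵗ e^{A(t−s)} B u(s) ds with u measurable and |u| ≤ 1, and suppose 0 ≤ t₁ < t₂ are such that ‖x(t)‖₂ ≤ M̂ for all t ∈ [t₁, t₂], and the two endpoints lie on the switching hyperplane on opposite sides of the evanescent strip: xₙ(t₁) = xₙ(t₂) = 0 with x_{n−1}(t₁) ≥ |b_{n−1}| and x_{n−1}(t₂) ≤ −|b_{n−1}|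 (or with these two sign conditions exchanged). Then t₂ − t₁ ≥ 2|b_{n−1}| / (‖A‖₂ M̂ + ‖B‖₂). -/
set_option synthInstance.maxHeartbeats 1000000
set_option maxHeartbeats 1000000


noncomputable section
open scoped Matrix ENNReal NNReal
open Filter

section AuxLip
open NormedSpace

variable {m : ℕ}

lemma opn_eq_norm (P : Matrix (Fin m) (Fin m) ℝ) :
    opn P = ‖Matrix.toEuclideanCLM (𝕜 := ℝ) P‖ := rfl

lemma opn_nonneg (P : Matrix (Fin m) (Fin m) ℝ) : 0 ≤ opn P := by
  rw [opn_eq_norm]; exact norm_nonneg _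

lemma eclm_mulVec (P : Matrix (Fin m) (Fin m) ℝ) (v : Fin m → ℝ) :
    Matrix.toEuclideanCLM (𝕜 := ℝ) P (euc v) = euc (P *ᵥ v) := rfl

lemma euc_mulVec_le (P : Matrix (Fin m) (Fin m) ℝ) (v : Fin m → ℝ) :
    ‖euc (P *ᵥ v)‖ ≤ opn P * ‖euc v‖ := by
  rw [← eclm_mulVec, opn_eq_norm]
  exact ContinuousLinearMap.le_opNorm _ _

lemma eclm_cont : Continuous (fun P => Matrix.toEuclideanCLM (𝕜 := ℝ) (n := Fin m) P) := by
  exact LinearMap.continuous_of_finiteDimensional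
    ({ toFun := fun P => Matrix.toEuclideanCLM (𝕜 := ℝ) P,
       map_add' := fun x y => map_add _ x y,
       map_smul' := fun c x => map_smul _ c x } :
      Matrix (Fin m) (Fin m) ℝ →ₗ[ℝ] (EuclideanSpace ℝ (Fin m) →L[ℝ] EuclideanSpace ℝ (Fin m)))

lemma eclm_mexp (P : Matrix (Fin m) (Fin m) ℝ) :
    Matrix.toEuclideanCLM (𝕜 := ℝ) (mexp P) = exp (Matrix.toEuclideanCLM (𝕜 := ℝ) P) := by
  letI : SeminormedRing (Matrix (Fin m) (Fin m) ℝ) := Matrix.linftyOpSemiNormedRing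
  letI : NormedRing (Matrix (Fin m) (Fin m) ℝ) := Matrix.linftyOpNormedRing
  letI : NormedAlgebra ℝ (Matrix (Fin m) (Fin m) ℝ) := Matrix.linftyOpNormedAlgebra
  letI : NormedAlgebra ℚ (Matrix (Fin m) (Fin m) ℝ) := Matrix.linftyOpNormedAlgebra
  letI : CompleteSpace (Matrix (Fin m) (Fin m) ℝ) := FiniteDimensional.complete ℝ _
  exact map_exp (Matrix.toEuclideanCLM (𝕜 := ℝ)) eclm_cont P

lemma opn_mexp_small (A : Matrix (Fin m) (Fin m) ℝ) {ε : ℝ} (hε : 0 < ε) :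
    ∃ δ > 0, ∀ r : ℝ, 0 ≤ r → r ≤ δ → opn (mexp (r • A) - 1) ≤ (opn A + ε) * r := by
  set T := Matrix.toEuclideanCLM (𝕜 := ℝ) A with hT
  have hd : HasDerivAt (fun h : ℝ => exp (h • T)) T 0 := by
    have h' := hasDerivAt_exp_smul_const (𝕂 := ℝ) T 0
    exact h'.congr_deriv (by rw [zero_smul ℝ T, exp_zero, one_mul])
  have ho := hasDerivAt_iff_isLittleO.mp hd
  have hb := ho.bound hε
  rw [Metric.eventually_nhds_iff] at hb
  obtain ⟨δ, hδ, hball⟩ := hb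
  refine ⟨δ/2, by linarith, fun r hr0 hrδ => ?_⟩
  have hrd : dist r 0 < δ := by
    rw [Real.dist_eq, sub_zero, abs_of_nonneg hr0]; linarith
  have e0 : exp ((0:ℝ) • T) = 1 := by rw [zero_smul ℝ T]; exact exp_zero
  have h1 : ‖exp (r • T) - 1 - r • T‖ ≤ ε * r := by
    have h := hball hrd
    rw [sub_zero, e0, Real.norm_eq_abs, abs_of_nonneg hr0] at h
    exact h
  have h2 : ‖r • T‖ ≤ r * ‖T‖ := by
    refine (_root_.norm_smul_le r T).trans ?_
    rw [Real.norm_eq_abs, abs_of_nonneg hr0]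
  have hsm : Matrix.toEuclideanCLM (𝕜 := ℝ) (r • A) = r • T := map_smul _ r A
  have heq : opn (mexp (r • A) - 1) = ‖exp (r • T) - 1‖ := by
    rw [opn_eq_norm, map_sub, map_one, eclm_mexp, hsm]
  have h4 : opn A = ‖T‖ := by rw [opn_eq_norm, ← hT]
  calc opn (mexp (r • A) - 1) = ‖(exp (r • T) - 1 - r • T) + r • T‖ := by
        rw [heq, sub_add_cancel]
    _ ≤ ‖exp (r • T) - 1 - r • T‖ + ‖r • T‖ := norm_add_le _ _
    _ ≤ ε * r + r * ‖T‖ := add_le_add h1 h2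
    _ = (opn A + ε) * r := by rw [h4]; ring

noncomputable def mvCLM (P : Matrix (Fin m) (Fin m) ℝ) : (Fin m → ℝ) →L[ℝ] (Fin m → ℝ) :=
  LinearMap.toContinuousLinearMap (Matrix.mulVecLin P)

lemma mvCLM_apply (P : Matrix (Fin m) (Fin m) ℝ) (v : Fin m → ℝ) : mvCLM P v = P *ᵥ v := rfl

noncomputable def eucCLM : (Fin m → ℝ) →L[ℝ] EuclideanSpace ℝ (Fin m) :=
  (PiLp.continuousLinearEquiv 2 ℝ (fun _ : Fin m => ℝ)).symm.toContinuousLinearMap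

lemma eucCLM_apply (v : Fin m → ℝ) : eucCLM v = euc v := rfl

lemma cont_exp_mulVec (A : Matrix (Fin m) (Fin m) ℝ) (b : Fin m → ℝ) (c : ℝ) :
    Continuous fun s : ℝ => mexp ((c - s) • A) *ᵥ b := by
  letI : SeminormedRing (Matrix (Fin m) (Fin m) ℝ) := Matrix.linftyOpSemiNormedRing
  letI : NormedRing (Matrix (Fin m) (Fin m) ℝ) := Matrix.linftyOpNormedRing
  letI : NormedAlgebra ℝ (Matrix (Fin m) (Fin m) ℝ) := Matrix.linftyOpNormedAlgebra
  letI : NormedAlgebra ℚ (Matrix (Fin m) (Fin m) ℝ) := Matrix.linftyOpNormedAlgebra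
  letI : CompleteSpace (Matrix (Fin m) (Fin m) ℝ) := FiniteDimensional.complete ℝ _
  have h1 : Continuous fun s : ℝ => mexp ((c - s) • A) := by
    have : Continuous fun s : ℝ => (c - s) • A :=
      ((continuous_const.sub continuous_id)).smul continuous_const
    exact exp_continuous.comp this
  have h2 : Continuous fun P : Matrix (Fin m) (Fin m) ℝ => P *ᵥ b :=
    LinearMap.continuous_of_finiteDimensional
      ({ toFun := fun P => P *ᵥ b,
         map_add' := fun P Q => Matrix.add_mulVec P Q b,
         map_smul' := fun c P => (Matrix.smul_mulVec c P b) } :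
        Matrix (Fin m) (Fin m) ℝ →ₗ[ℝ] (Fin m → ℝ))
  exact h2.comp h1

lemma intInt (A : Matrix (Fin m) (Fin m) ℝ) (b : Fin m → ℝ) {u : ℝ → ℝ}
    (hu : Measurable u) (hu1 : ∀ s : ℝ, 0 ≤ s → |u s| ≤ 1) {p q : ℝ} (hp : 0 ≤ p) (hq : 0 ≤ q)
    (c : ℝ) :
    IntervalIntegrable (fun s => u s • (mexp ((c - s) • A) *ᵥ b)) MeasureTheory.volume p q := by
  have hcont := cont_exp_mulVec A b c
  rw [intervalIntegrable_iff]
  have hg : MeasureTheory.IntegrableOn (fun s : ℝ => ‖mexp ((c - s) • A) *ᵥ b‖)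
      (Set.uIoc p q) MeasureTheory.volume := hcont.norm.integrableOn_uIoc
  refine MeasureTheory.Integrable.mono' hg ?_ ?_
  · exact (hu.aestronglyMeasurable.smul hcont.aestronglyMeasurable).restrict
  · rw [MeasureTheory.ae_restrict_iff' measurableSet_uIoc]
    refine MeasureTheory.ae_of_all _ fun s hs => ?_
    have hs0 : 0 ≤ s := le_of_lt (lt_of_le_of_lt (le_min hp hq) hs.1)
    rw [norm_smul]
    have : ‖u s‖ ≤ 1 := by rw [Real.norm_eq_abs]; exact hu1 s hs0
    exact mul_le_of_le_one_left (norm_nonneg _) this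

lemma step_eq (A : Matrix (Fin m) (Fin m) ℝ) (b : Fin m → ℝ) {u : ℝ → ℝ}
    (hu : Measurable u) (hu1 : ∀ s : ℝ, 0 ≤ s → |u s| ≤ 1)
    (x₀ : Fin m → ℝ) (x : ℝ → Fin m → ℝ)
    (hx : ∀ t : ℝ, 0 ≤ t →
      x t = mexp (t • A) *ᵥ x₀ + ∫ s in (0:ℝ)..t, u s • (mexp ((t - s) • A) *ᵥ b))
    {p q : ℝ} (hp : 0 ≤ p) (hpq : p ≤ q) :
    x q = mexp ((q - p) • A) *ᵥ x p + ∫ s in p..q, u s • (mexp ((q - s) • A) *ᵥ b) := by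
  have hq : 0 ≤ q := hp.trans hpq
  have hexpadd : ∀ s : ℝ, mexp ((q - p) • A) * mexp ((p - s) • A) = mexp ((q - s) • A) := by
    intro s
    rw [mexp, mexp, mexp, ← Matrix.exp_add_of_commute]
    · congr 1
      rw [← add_smul]
      ring_nf
    · exact ((Commute.refl A).smul_left _).smul_right _
  rw [hx q hq, hx p hp, Matrix.mulVec_add, Matrix.mulVec_mulVec]
  have h0 : mexp ((q - p) • A) * mexp (p • A) = mexp (q • A) := by
    have h := hexpadd 0
    simpa using h
  rw [h0]
  have hpull : mexp ((q - p) • A) *ᵥ (∫ s in (0:ℝ)..p, u s • (mexp ((p - s) • A) *ᵥ b)) =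
      ∫ s in (0:ℝ)..p, u s • (mexp ((q - s) • A) *ᵥ b) := by
    rw [← mvCLM_apply,
      ← (mvCLM (mexp ((q - p) • A))).intervalIntegral_comp_comm (intInt A b hu hu1 le_rfl hp p)]
    refine intervalIntegral.integral_congr fun s _ => ?_
    rw [_root_.map_smul, mvCLM_apply, Matrix.mulVec_mulVec, hexpadd s]
  rw [hpull, add_assoc]
  congr 1
  exact (intervalIntegral.integral_add_adjacent_intervals
    (intInt A b hu hu1 le_rfl hp q) (intInt A b hu hu1 hp hq q)).symm

lemma step_bound (A : Matrix (Fin m) (Fin m) ℝ) (b : Fin m → ℝ) {u : ℝ → ℝ}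
    (hu : Measurable u) (hu1 : ∀ s : ℝ, 0 ≤ s → |u s| ≤ 1)
    (x₀ : Fin m → ℝ) (x : ℝ → Fin m → ℝ)
    (hx : ∀ t : ℝ, 0 ≤ t →
      x t = mexp (t • A) *ᵥ x₀ + ∫ s in (0:ℝ)..t, u s • (mexp ((t - s) • A) *ᵥ b))
    {R K δ : ℝ} (hR : 0 ≤ R) (hK : 0 ≤ K)
    (hsmall : ∀ r : ℝ, 0 ≤ r → r ≤ δ → opn (mexp (r • A) - 1) ≤ K * r)
    {p q : ℝ} (hp : 0 ≤ p) (hpq : p ≤ q) (hδ : q - p ≤ δ)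
    (hxp : ‖euc (x p)‖ ≤ R) :
    ‖euc (x q - x p)‖ ≤ K * (q - p) * R + (1 + K * δ) * ‖euc b‖ * (q - p) := by
  have hq : 0 ≤ q := hp.trans hpq
  have hδ0 : 0 ≤ δ := le_trans (by linarith) hδ
  have hse := step_eq A b hu hu1 x₀ x hx hp hpq
  have hsplit : x q - x p =
      (mexp ((q - p) • A) - 1) *ᵥ x p + ∫ s in p..q, u s • (mexp ((q - s) • A) *ᵥ b) := by
    rw [hse, Matrix.sub_mulVec, Matrix.one_mulVec]
    abel
  have heucadd : euc (x q - x p) =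
      euc ((mexp ((q - p) • A) - 1) *ᵥ x p) +
        euc (∫ s in p..q, u s • (mexp ((q - s) • A) *ᵥ b)) := by
    rw [hsplit]; rfl
  rw [heucadd]
  refine (norm_add_le _ _).trans ?_
  have h1 : ‖euc ((mexp ((q - p) • A) - 1) *ᵥ x p)‖ ≤ K * (q - p) * R := by
    refine (euc_mulVec_le _ _).trans ?_
    have hs := hsmall (q - p) (by linarith) hδ
    have := mul_le_mul hs hxp (norm_nonneg _) (mul_nonneg hK (by linarith))
    linarith
  have h2 : ‖euc (∫ s in p..q, u s • (mexp ((q - s) • A) *ᵥ b))‖ ≤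
      (1 + K * δ) * ‖euc b‖ * (q - p) := by
    have hii := intInt A b hu hu1 hp hq q
    rw [← eucCLM_apply, ← eucCLM.intervalIntegral_comp_comm hii]
    have hbnd : ∀ s ∈ Set.uIoc p q,
        ‖eucCLM (u s • (mexp ((q - s) • A) *ᵥ b))‖ ≤ (1 + K * δ) * ‖euc b‖ := by
      intro s hs
      rw [Set.uIoc_of_le hpq] at hs
      have hs0 : 0 ≤ s := le_of_lt (lt_of_le_of_lt hp hs.1)
      have hr0 : 0 ≤ q - s := by linarith [hs.2]
      have hrδ : q - s ≤ δ := by linarith [hs.1]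
      rw [_root_.map_smul, norm_smul, eucCLM_apply]
      have hb1 : ‖euc (mexp ((q - s) • A) *ᵥ b)‖ ≤ (1 + K * δ) * ‖euc b‖ := by
        have hdecomp : mexp ((q - s) • A) *ᵥ b = b + (mexp ((q - s) • A) - 1) *ᵥ b := by
          rw [Matrix.sub_mulVec, Matrix.one_mulVec]; abel
        have heuc2 : euc (mexp ((q - s) • A) *ᵥ b) =
            euc b + euc ((mexp ((q - s) • A) - 1) *ᵥ b) := by rw [hdecomp]; rfl
        rw [heuc2]
        refine (norm_add_le _ _).trans ?_
        have hop : opn (mexp ((q - s) • A) - 1) ≤ K * δ :=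
          (hsmall _ hr0 hrδ).trans (by nlinarith)
        have := (euc_mulVec_le (mexp ((q - s) • A) - 1) b).trans
          (mul_le_mul_of_nonneg_right hop (norm_nonneg _))
        nlinarith [norm_nonneg (euc b)]
      have hu1s : ‖u s‖ ≤ 1 := by rw [Real.norm_eq_abs]; exact hu1 s hs0
      calc ‖u s‖ * ‖euc (mexp ((q - s) • A) *ᵥ b)‖ ≤ 1 * ((1 + K * δ) * ‖euc b‖) := by
            apply mul_le_mul hu1s hb1 (norm_nonneg _) zero_le_one
        _ = (1 + K * δ) * ‖euc b‖ := one_mul _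
    have hni := intervalIntegral.norm_integral_le_of_norm_le_const hbnd
    rwa [abs_of_nonneg (by linarith : (0:ℝ) ≤ q - p)] at hni
  linarith

lemma lip (A : Matrix (Fin m) (Fin m) ℝ) (b : Fin m → ℝ) {u : ℝ → ℝ}
    (hu : Measurable u) (hu1 : ∀ s : ℝ, 0 ≤ s → |u s| ≤ 1)
    (x₀ : Fin m → ℝ) (x : ℝ → Fin m → ℝ)
    (hx : ∀ t : ℝ, 0 ≤ t →
      x t = mexp (t • A) *ᵥ x₀ + ∫ s in (0:ℝ)..t, u s • (mexp ((t - s) • A) *ᵥ b))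
    {t₁ t₂ R : ℝ} (ht₁ : 0 ≤ t₁) (h12 : t₁ ≤ t₂) (hR : 0 ≤ R)
    (hball : ∀ t ∈ Set.Icc t₁ t₂, ‖euc (x t)‖ ≤ R) :
    ‖euc (x t₂ - x t₁)‖ ≤ (opn A * R + ‖euc b‖) * (t₂ - t₁) := by
  set Δ := t₂ - t₁ with hΔdef
  have hΔ0 : 0 ≤ Δ := by simp [hΔdef]; linarith
  refine le_of_forall_pos_le_add fun ε hε => ?_
  have hden : (0:ℝ) < R * Δ + ‖euc b‖ * Δ + 1 := by positivity
  set ε₁ := ε / (R * Δ + ‖euc b‖ * Δ + 1) with hε₁def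
  have hε₁ : 0 < ε₁ := div_pos hε hden
  obtain ⟨δ₀, hδ₀, hsm⟩ := opn_mexp_small A hε₁
  set K := opn A + ε₁ with hKdef
  have hK0 : 0 < K := by have := opn_nonneg A; simp [hKdef]; linarith
  set δ := min δ₀ (ε₁ / K) with hδdef
  have hδpos : 0 < δ := lt_min hδ₀ (div_pos hε₁ hK0)
  have hsmall : ∀ r : ℝ, 0 ≤ r → r ≤ δ → opn (mexp (r • A) - 1) ≤ K * r :=
    fun r h0 hr => hsm r h0 (hr.trans (min_le_left _ _))
  have hKδ : K * δ ≤ ε₁ := by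
    have h := min_le_right δ₀ (ε₁ / K)
    have : K * δ ≤ K * (ε₁ / K) := by
      apply mul_le_mul_of_nonneg_left _ hK0.le
      simpa [hδdef] using h
    rwa [mul_div_cancel₀ _ (ne_of_gt hK0)] at this
  set N := max 1 ⌈Δ / δ⌉₊ with hNdef
  have hN1 : 1 ≤ N := le_max_left _ _
  have hNpos : (0:ℝ) < (N:ℝ) := by exact_mod_cast lt_of_lt_of_le Nat.one_pos hN1
  have hstep : Δ / N ≤ δ := by
    rw [div_le_iff₀ hNpos]
    have hc : Δ / δ ≤ (⌈Δ / δ⌉₊ : ℝ) := Nat.le_ceil _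
    have h2 : ((⌈Δ / δ⌉₊ : ℕ) : ℝ) ≤ (N:ℝ) := by exact_mod_cast le_max_right 1 ⌈Δ / δ⌉₊
    have hΔδ : Δ = (Δ / δ) * δ := by field_simp
    calc Δ = (Δ / δ) * δ := hΔδ
      _ ≤ (N:ℝ) * δ := by nlinarith
      _ = δ * (N:ℝ) := mul_comm _ _
  set h := Δ / (N:ℝ) with hhdef
  have hh0 : 0 ≤ h := by positivity
  set sp : ℕ → ℝ := fun i => t₁ + i * h with hsp
  have hsN : sp N = t₂ := by
    simp only [hsp]
    field_simp [hhdef]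
    rw [hhdef, mul_div_cancel₀ _ (ne_of_gt hNpos), hΔdef]; ring
  have hmem : ∀ i : ℕ, i ≤ N → sp i ∈ Set.Icc t₁ t₂ := by
    intro i hi
    have hiN : (i:ℝ) ≤ (N:ℝ) := by exact_mod_cast hi
    have hi0 : (0:ℝ) ≤ (i:ℝ) := Nat.cast_nonneg i
    constructor
    · simp only [hsp]; nlinarith
    · have hNh : (N:ℝ) * h = Δ := by
        rw [hhdef]; field_simp
      simp only [hsp]; nlinarith
  have keystep : ∀ i : ℕ, i < N →
      ‖euc (x (sp (i+1)) - x (sp i))‖ ≤ K * h * R + (1 + K * δ) * ‖euc b‖ * h := by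
    intro i hi
    have hp : 0 ≤ sp i := le_trans ht₁ (hmem i hi.le).1
    have hpq : sp i ≤ sp (i+1) := by
      simp only [hsp, Nat.cast_add, Nat.cast_one]
      nlinarith
    have hqp : sp (i+1) - sp i = h := by
      simp only [hsp, Nat.cast_add, Nat.cast_one]
      ring
    have hb := step_bound A b hu hu1 x₀ x hx hR hK0.le hsmall hp hpq
      (by rw [hqp]; exact hstep) (hball _ (hmem i hi.le))
    rwa [hqp] at hb
  have htel : euc (x t₂ - x t₁) = ∑ i ∈ Finset.range N, eucCLM (x (sp (i+1)) - x (sp i)) := by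
    have : x t₂ - x t₁ = ∑ i ∈ Finset.range N, (x (sp (i+1)) - x (sp i)) := by
      rw [Finset.sum_range_sub (fun i => x (sp i)), hsN]
      simp [hsp]
    rw [← eucCLM_apply, this, map_sum]
  calc ‖euc (x t₂ - x t₁)‖
      = ‖∑ i ∈ Finset.range N, eucCLM (x (sp (i+1)) - x (sp i))‖ := by rw [htel]
    _ ≤ ∑ i ∈ Finset.range N, ‖eucCLM (x (sp (i+1)) - x (sp i))‖ := norm_sum_le _ _
    _ ≤ ∑ i ∈ Finset.range N, (K * h * R + (1 + K * δ) * ‖euc b‖ * h) := by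
        refine Finset.sum_le_sum fun i hi => ?_
        rw [eucCLM_apply]
        exact keystep i (Finset.mem_range.mp hi)
    _ = (N:ℝ) * (K * h * R + (1 + K * δ) * ‖euc b‖ * h) := by
        rw [Finset.sum_const, Finset.card_range, nsmul_eq_mul]
    _ ≤ (opn A * R + ‖euc b‖) * Δ + ε := by
        have hNh : (N:ℝ) * h = Δ := by rw [hhdef]; field_simp
        have hexp : (N:ℝ) * (K * h * R + (1 + K * δ) * ‖euc b‖ * h)
            = K * Δ * R + (1 + K * δ) * ‖euc b‖ * Δ := by
          rw [← hNh]; ring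
        rw [hexp]
        have hb0 : (0:ℝ) ≤ ‖euc b‖ := norm_nonneg _
        have hεden : ε₁ * (R * Δ + ‖euc b‖ * Δ + 1) = ε := by
          rw [hε₁def]; field_simp
        have hKδε : K * δ ≤ ε₁ := hKδ
        have hopn := opn_nonneg A
        nlinarith [mul_nonneg (mul_nonneg hε₁.le hb0) hΔ0, mul_nonneg hε₁.le hΔ0,
          mul_nonneg hb0 hΔ0, mul_nonneg hR hΔ0]

lemma abs_le_euc (v : Fin m → ℝ) (i : Fin m) : |v i| ≤ ‖euc v‖ := by
  rw [EuclideanSpace.norm_eq, ← Real.sqrt_sq_eq_abs]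
  apply Real.sqrt_le_sqrt
  have heq : (v i) ^ 2 = ‖euc v i‖ ^ 2 := by
    rw [Real.norm_eq_abs, sq_abs]; rfl
  rw [heq]
  exact Finset.single_le_sum (fun j _ => sq_nonneg ‖euc v j‖) (Finset.mem_univ i)


end AuxLip

/-- minimum inter-switch duration.
For the observer canonical realization with `A` Hurwitz and `b_{n−1} ≠ 0`, with
`M̂ = M(2M+1)‖B‖₂/σ`, any trajectory segment that stays in the ball of radius `M̂` and
whose endpoints lie on the switching hyperplane on opposite sides of the evanescent
strip takes at least `2|b_{n−1}| / (‖A‖₂ M̂ + ‖B‖₂)` units of time. -/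
theorem minimum_inter_switch_duration
    (n : ℕ) (a b : Fin (n + 2) → ℝ)
    (hA : IsHurwitz (obsA n a)) (hb : b (Fin.last (n + 1)) ≠ 0)
    (M σ : ℝ) (hM : 1 ≤ M) (hσ : 0 < σ)
    (hexp : ∀ t : ℝ, 0 ≤ t → opn (mexp (t • obsA n a)) ≤ M * Real.exp (-σ * t))
    (u : ℝ → ℝ) (hu : Measurable u) (hu1 : ∀ t : ℝ, 0 ≤ t → |u t| ≤ 1)
    (x₀ : Fin (n + 2) → ℝ) (x : ℝ → Fin (n + 2) → ℝ)
    (hx : ∀ t : ℝ, 0 ≤ t →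
      x t = mexp (t • obsA n a) *ᵥ x₀ +
        ∫ s in (0:ℝ)..t, u s • (mexp ((t - s) • obsA n a) *ᵥ b))
    (t₁ t₂ : ℝ) (ht₁ : 0 ≤ t₁) (h12 : t₁ < t₂)
    (hball : ∀ t ∈ Set.Icc t₁ t₂, ‖euc (x t)‖ ≤ M * (2 * M + 1) * ‖euc b‖ / σ)
    (hend₁ : x t₁ (Fin.last (n + 1)) = 0) (hend₂ : x t₂ (Fin.last (n + 1)) = 0)
    (hsides :
      (|b (Fin.last (n + 1))| ≤ x t₁ (⟨n, by omega⟩ : Fin (n + 2)) ∧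
        x t₂ (⟨n, by omega⟩ : Fin (n + 2)) ≤ -|b (Fin.last (n + 1))|) ∨
      (|b (Fin.last (n + 1))| ≤ x t₂ (⟨n, by omega⟩ : Fin (n + 2)) ∧
        x t₁ (⟨n, by omega⟩ : Fin (n + 2)) ≤ -|b (Fin.last (n + 1))|)) :
    2 * |b (Fin.last (n + 1))| /
        (opn (obsA n a) * (M * (2 * M + 1) * ‖euc b‖ / σ) + ‖euc b‖) ≤ t₂ - t₁ := by
  set A := obsA n a with hA'
  set R := M * (2 * M + 1) * ‖euc b‖ / σ with hRdef
  set bb := |b (Fin.last (n + 1))| with hbb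
  have hM0 : 0 < M := lt_of_lt_of_le one_pos hM
  have hb0 : 0 < ‖euc b‖ := by
    rw [norm_pos_iff]
    intro hzero
    unfold euc at hzero
    rw [WithLp.toLp_eq_zero] at hzero
    exact hb (congrFun hzero (Fin.last (n + 1)))
  have hR0 : 0 ≤ R := by
    rw [hRdef]
    exact div_nonneg (mul_nonneg (mul_nonneg hM0.le (by linarith)) hb0.le) hσ.le
  have hL : 0 < opn A * R + ‖euc b‖ := by
    have := opn_nonneg A
    nlinarith
  have hlip := lip A b hu hu1 x₀ x hx ht₁ h12.le hR0 hball
  set i : Fin (n + 2) := ⟨n, by omega⟩ with hi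
  have hcoord : 2 * bb ≤ ‖euc (x t₂ - x t₁)‖ := by
    have habs := abs_le_euc (x t₂ - x t₁) i
    have hsub : (x t₂ - x t₁) i = x t₂ i - x t₁ i := rfl
    rw [hsub] at habs
    rcases hsides with ⟨h1, h2⟩ | ⟨h1, h2⟩
    · have hd : x t₂ i - x t₁ i ≤ -(2 * bb) := by rw [hbb]; linarith
      have := neg_le_abs (x t₂ i - x t₁ i)
      linarith
    · have hd : 2 * bb ≤ x t₂ i - x t₁ i := by rw [hbb]; linarith
      have := le_abs_self (x t₂ i - x t₁ i)
      linarith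
  rw [div_le_iff₀ hL]
  calc 2 * bb ≤ ‖euc (x t₂ - x t₁)‖ := hcoord
    _ ≤ (opn A * R + ‖euc b‖) * (t₂ - t₁) := hlip
    _ = (t₂ - t₁) * (opn A * R + ‖euc b‖) := mul_comm _ _
end
end
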